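/- Let h ∈ ℂ[[u]][v] be a Weierstrass polynomial of degree b ≥ 1. Then Φ_h = Res_v(h, ω^d + ℓ) is a monic polynomial of degree b·d in ω over ℂ[[u]], and every non-leading coefficient of Φ_h is a power series in u with zero constant term; that is, Φ_h is a Weierstrass polynomial of degree b·d in the variable ω. -/

import Mathlib

open Polynomial

/-- The Sylvester matrix of `f` and `g`, regarded as polynomials of degree `m` and `n`
respectively (rows `0,…,n-1` carry the coefficients of `f`, rows `n,…,n+m-1` those of `g`). -/
noncomputable def sylvester {R : Type*} [CommRing R] (f g : Polynomial R) (m n : ℕ) :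
    Matrix (Fin (n + m)) (Fin (n + m)) R :=
  Matrix.of fun i j =>
    if (i : ℕ) < n then
      (if (i : ℕ) ≤ (j : ℕ) ∧ (j : ℕ) ≤ (i : ℕ) + m then f.coeff (m + i - j) else 0)
    else
      (if (i : ℕ) - n ≤ (j : ℕ) ∧ (j : ℕ) ≤ (i : ℕ) then g.coeff ((i : ℕ) - (j : ℕ)) else 0)

/-- The resultant of `f` and `g`, regarded as polynomials of degree `m` and `n`:
the determinant of the Sylvester matrix. -/
noncomputable def resultant {R : Type*} [CommRing R] (f g : Polynomial R) (m n : ℕ) : R :=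
  (_root_.sylvester f g m n).det

/-- A Weierstrass polynomial: a monic polynomial in `v` over `ℂ[[u]]` all of whose
non-leading coefficients vanish at `u = 0`. -/
def IsWeierstrass (f : Polynomial (PowerSeries ℂ)) : Prop :=
  f.Monic ∧ ∀ i < f.natDegree, PowerSeries.constantCoeff (f.coeff i) = 0

/-- The partial derivative `∂f/∂u`: the formal derivative of power series applied to
each coefficient of `f`. -/
noncomputable def pderivU (f : Polynomial (PowerSeries ℂ)) : Polynomial (PowerSeries ℂ) :=
  f.sum fun i c => Polynomial.C (PowerSeries.derivative ℂ c) * Polynomial.X ^ i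

/-- The intersection multiplicity `i₀(f,g) = dim_ℂ ℂ[[u]][v]/(f,g)` (as `finrank`,
which is `0` when the dimension is infinite). -/
noncomputable def interMult (f g : Polynomial (PowerSeries ℂ)) : ℕ :=
  Module.finrank ℂ (Polynomial (PowerSeries ℂ) ⧸ Ideal.span {f, g})

/-- The Milnor number `μ₀(f) = dim_ℂ ℂ[[u]][v]/(∂f/∂u, ∂f/∂v)` (as `finrank`,
which is `0` when the dimension is infinite). -/
noncomputable def milnor (f : Polynomial (PowerSeries ℂ)) : ℕ :=
  Module.finrank ℂ (Polynomial (PowerSeries ℂ) ⧸ Ideal.span {pderivU f, derivative f})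

/-- The local equation `ℓ = 1 + (α + u)^d + (γ + v)^d` of the Fermat curve
`x^d + y^d + z^d = 0` at the point `[1, α, γ]`. -/
noncomputable def ell (d : ℕ) (α γ : ℂ) : Polynomial (PowerSeries ℂ) :=
  Polynomial.C (1 + (PowerSeries.C α + PowerSeries.X) ^ d) +
    (Polynomial.C (PowerSeries.C γ) + Polynomial.X) ^ d

/-- `Φ_h = Res_v(h, ω^d + ℓ)`: the resultant with respect to `v` of `h` and `ω^d + ℓ`,
both viewed as polynomials in `v` with coefficients in `ℂ[[u]][ω]`.  It is a polynomial
in `ω` over `ℂ[[u]]`. -/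
noncomputable def PhiRes (d : ℕ) (α γ : ℂ) (h : Polynomial (PowerSeries ℂ)) :
    Polynomial (PowerSeries ℂ) :=
  _root_.resultant
    (h.map (Polynomial.C : PowerSeries ℂ →+* Polynomial (PowerSeries ℂ)))
    (Polynomial.C (Polynomial.X ^ d) +
      (ell d α γ).map (Polynomial.C : PowerSeries ℂ →+* Polynomial (PowerSeries ℂ)))
    h.natDegree d

section Aux

variable {R : Type*} [CommRing R]

lemma aux_coeff_mul_of_le {p q : R[X]} {m n : ℕ} (hp : p.natDegree ≤ m) (hq : q.natDegree ≤ n) :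
    (p * q).coeff (m + n) = p.coeff m * q.coeff n := by
  rw [coeff_mul, Finset.sum_eq_single (m, n)]
  · intro x hx hne
    rw [Finset.HasAntidiagonal.mem_antidiagonal] at hx
    have hne' : x.1 ≠ m ∨ x.2 ≠ n := by
      by_contra hcon
      push_neg at hcon
      exact hne (Prod.ext hcon.1 hcon.2)
    rcases lt_or_ge m x.1 with h1 | h1
    · rw [coeff_eq_zero_of_natDegree_lt (lt_of_le_of_lt hp h1), zero_mul]
    · have : n < x.2 := by omega
      rw [coeff_eq_zero_of_natDegree_lt (lt_of_le_of_lt hq this), mul_zero]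
  · intro hmem
    simp at hmem

lemma aux_coeff_prod_of_le {ι : Type*} (s : Finset ι) (f : ι → R[X]) (w : ι → ℕ)
    (h : ∀ i ∈ s, (f i).natDegree ≤ w i) :
    (∏ i ∈ s, f i).coeff (∑ i ∈ s, w i) = ∏ i ∈ s, (f i).coeff (w i) := by
  induction s using Finset.cons_induction with
  | empty => simp
  | cons a s ha ih =>
    rw [Finset.prod_cons, Finset.sum_cons, Finset.prod_cons,
      aux_coeff_mul_of_le (h a (Finset.mem_cons_self a s))
        ((natDegree_prod_le s f).trans
          (Finset.sum_le_sum fun i hi => h i (Finset.mem_cons_of_mem hi))),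
      ih fun i hi => h i (Finset.mem_cons_of_mem hi)]

lemma aux_natDegree_det_le {n : Type*} [DecidableEq n] [Fintype n]
    (M : Matrix n n R[X]) (w : n → ℕ) (h : ∀ i j, (M i j).natDegree ≤ w i) :
    M.det.natDegree ≤ ∑ i, w i := by
  rw [Matrix.det_apply']
  refine natDegree_sum_le_of_forall_le _ _ fun σ _ => ?_
  rw [← C_eq_intCast]
  refine (natDegree_C_mul_le _ _).trans ?_
  refine (natDegree_prod_le _ _).trans ?_
  rw [← Equiv.sum_comp σ w]
  exact Finset.sum_le_sum fun i _ => h (σ i) i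

lemma aux_coeff_det {n : Type*} [DecidableEq n] [Fintype n]
    (M : Matrix n n R[X]) (w : n → ℕ) (h : ∀ i j, (M i j).natDegree ≤ w i) :
    M.det.coeff (∑ i, w i) = Matrix.det (Matrix.of fun i j => (M i j).coeff (w i)) := by
  rw [Matrix.det_apply', Matrix.det_apply', finset_sum_coeff]
  refine Finset.sum_congr rfl fun σ _ => ?_
  rw [← C_eq_intCast, coeff_C_mul]
  congr 1
  have := aux_coeff_prod_of_le Finset.univ (fun i => M (σ i) i) (fun i => w (σ i))
    (fun i _ => h (σ i) i)
  rw [Equiv.sum_comp σ w] at this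
  exact this


theorem stmt17 (d : ℕ) (hd : 1 ≤ d) (α γ : ℂ) (hγ : γ ≠ 0) (hpt : 1 + α ^ d + γ ^ d = 0)
    (b : ℕ) (hb : 1 ≤ b) (h : Polynomial (PowerSeries ℂ))
    (hW : IsWeierstrass h) (hdeg : h.natDegree = b) :
    (PhiRes d α γ h).Monic ∧ (PhiRes d α γ h).natDegree = b * d ∧
    ∀ i < b * d, PowerSeries.constantCoeff ((PhiRes d α γ h).coeff i) = 0 := by
  subst hdeg
  obtain ⟨hmon, hvan⟩ := hW
  have hd0 : d ≠ 0 := by omega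
  set F : Polynomial (Polynomial (PowerSeries ℂ)) :=
    h.map (Polynomial.C : PowerSeries ℂ →+* Polynomial (PowerSeries ℂ)) with hF
  set G : Polynomial (Polynomial (PowerSeries ℂ)) :=
    Polynomial.C (Polynomial.X ^ d) +
      (ell d α γ).map (Polynomial.C : PowerSeries ℂ →+* Polynomial (PowerSeries ℂ)) with hG
  set M := _root_.sylvester F G h.natDegree d with hM
  have hPhi : PhiRes d α γ h = M.det := rfl
  have hGcoeff : ∀ k : ℕ, G.coeff k =
      (if k = 0 then Polynomial.X ^ d else 0) + Polynomial.C ((ell d α γ).coeff k) := by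
    intro k
    rw [hG, coeff_add, coeff_map, coeff_C]
  have key : ∀ m : ℕ, (∑ i ∈ Finset.range (d + m), if i < d then 0 else d) = m * d := by
    intro m
    induction m with
    | zero =>
      rw [Nat.add_zero, Nat.zero_mul]
      exact Finset.sum_eq_zero fun i hi => if_pos (Finset.mem_range.mp hi)
    | succ k ih =>
      rw [Nat.add_succ, Finset.sum_range_succ, ih, if_neg (by omega), Nat.succ_mul]
  have hsum : (∑ i : Fin (d + h.natDegree), if (i : ℕ) < d then 0 else d)
      = h.natDegree * d := by
    rw [Fin.sum_univ_eq_sum_range (fun i => if i < d then 0 else d) (d + h.natDegree)]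
    exact key h.natDegree
  have hbound : ∀ i j : Fin (d + h.natDegree),
      (M i j).natDegree ≤ (if (i : ℕ) < d then 0 else d) := by
    intro i j
    rw [hM]
    by_cases hi : (i : ℕ) < d
    · rw [if_pos hi]
      simp only [_root_.sylvester, Matrix.of_apply, if_pos hi]
      split_ifs
      · rw [coeff_map]; exact (natDegree_C _).le
      · exact natDegree_zero.le
    · rw [if_neg hi]
      simp only [_root_.sylvester, Matrix.of_apply, if_neg hi]
      split_ifs
      · rw [hGcoeff]
        refine (natDegree_add_le _ _).trans (max_le ?_ ?_)
        · split_ifs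
          · exact (natDegree_X_pow d).le
          · simp
        · simp
      · simp
  have hdegle : M.det.natDegree ≤ h.natDegree * d := by
    have e := aux_natDegree_det_le M (fun i => if (i : ℕ) < d then 0 else d) hbound
    rwa [hsum] at e
  have hlead : M.det.coeff (h.natDegree * d) = 1 := by
    have e := aux_coeff_det M (fun i => if (i : ℕ) < d then 0 else d) hbound
    rw [hsum] at e
    rw [e]
    have htri : (Matrix.of fun i j : Fin (d + h.natDegree) =>
        (M i j).coeff (if (i : ℕ) < d then 0 else d)).BlockTriangular id := by
      intro i j hij
      have hji : (j : ℕ) < (i : ℕ) := hij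
      rw [Matrix.of_apply, hM]
      by_cases hi : (i : ℕ) < d
      · simp only [_root_.sylvester, Matrix.of_apply, if_pos hi]
        rw [if_neg (by omega), coeff_zero]
      · simp only [_root_.sylvester, Matrix.of_apply, if_neg hi]
        split_ifs with hcond
        · rw [hGcoeff, if_neg (by omega), zero_add, coeff_C, if_neg hd0]
        · exact coeff_zero _
    rw [Matrix.det_of_upperTriangular htri]
    refine Finset.prod_eq_one fun i _ => ?_
    rw [Matrix.of_apply, hM]
    by_cases hi : (i : ℕ) < d
    · simp only [_root_.sylvester, Matrix.of_apply, if_pos hi]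
      rw [if_pos ⟨le_refl _, Nat.le_add_right _ _⟩, Nat.add_sub_cancel, coeff_map, coeff_C_zero]
      exact hmon.coeff_natDegree
    · simp only [_root_.sylvester, Matrix.of_apply, if_neg hi]
      rw [if_pos ⟨Nat.sub_le _ _, le_refl _⟩, Nat.sub_self, hGcoeff, if_pos rfl, coeff_add,
        coeff_X_pow, if_pos rfl, coeff_C, if_neg hd0, add_zero]
  have hdeq : M.det.natDegree = h.natDegree * d := by
    refine le_antisymm hdegle (le_natDegree_of_ne_zero ?_)
    rw [hlead]; exact one_ne_zero
  have hmonic : M.det.Monic := by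
    have : M.det.leadingCoeff = 1 := by rw [leadingCoeff, hdeq, hlead]
    exact this
  have hl0 : (PowerSeries.constantCoeff) ((ell d α γ).coeff 0) = 0 := by
    have h1 : (ell d α γ).coeff 0 =
        (1 + (PowerSeries.C α + PowerSeries.X) ^ d) + PowerSeries.C γ ^ d := by
      rw [ell, coeff_add, coeff_C_zero, coeff_zero_eq_eval_zero]
      simp
    rw [h1]
    simp only [map_add, map_one, map_pow, PowerSeries.constantCoeff_C,
      PowerSeries.constantCoeff_X, add_zero]
    exact hpt
  have hmap : (M.det).map (PowerSeries.constantCoeff)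
      = Polynomial.X ^ (h.natDegree * d) := by
    have h2 : (M.det).map (PowerSeries.constantCoeff)
        = (M.map (Polynomial.mapRingHom (PowerSeries.constantCoeff))).det := by
      have e2 := RingHom.map_det (Polynomial.mapRingHom (PowerSeries.constantCoeff)) M
      rwa [RingHom.mapMatrix_apply] at e2
    have htri' : (M.map
        (Polynomial.mapRingHom (PowerSeries.constantCoeff))).BlockTriangular
        OrderDual.toDual := by
      intro i j hij
      have hij' : (i : ℕ) < (j : ℕ) := hij
      rw [Matrix.map_apply, hM]
      by_cases hi : (i : ℕ) < d
      · simp only [_root_.sylvester, Matrix.of_apply, if_pos hi, coe_mapRingHom]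
        split_ifs with hcond
        · rw [coeff_map, Polynomial.map_C, hvan _ (by omega), Polynomial.C_0]
        · exact Polynomial.map_zero _
      · simp only [_root_.sylvester, Matrix.of_apply, if_neg hi, coe_mapRingHom]
        rw [if_neg (by omega), Polynomial.map_zero]
    have hdiag : ∀ i : Fin (d + h.natDegree),
        (M.map (Polynomial.mapRingHom (PowerSeries.constantCoeff))) i i
          = Polynomial.X ^ (if (i : ℕ) < d then 0 else d) := by
      intro i
      rw [Matrix.map_apply, hM]
      by_cases hi : (i : ℕ) < d
      · simp only [_root_.sylvester, Matrix.of_apply, if_pos hi, coe_mapRingHom]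
        rw [if_pos ⟨le_refl _, Nat.le_add_right _ _⟩, Nat.add_sub_cancel, coeff_map,
          Polynomial.map_C, hmon.coeff_natDegree, map_one, Polynomial.C_1, pow_zero]
      · simp only [_root_.sylvester, Matrix.of_apply, if_neg hi, coe_mapRingHom]
        rw [if_pos ⟨Nat.sub_le _ _, le_refl _⟩, Nat.sub_self, hGcoeff, if_pos rfl,
          Polynomial.map_add, Polynomial.map_pow, Polynomial.map_X, Polynomial.map_C, hl0,
          Polynomial.C_0, add_zero]
    rw [h2, Matrix.det_of_lowerTriangular _ htri',
      Finset.prod_congr rfl fun i _ => hdiag i, Finset.prod_pow_eq_pow_sum, hsum]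
  rw [hPhi]
  refine ⟨hmonic, hdeq, fun i hi => ?_⟩
  have e := congrArg (fun p => Polynomial.coeff p i) hmap
  simp only [coeff_map, coeff_X_pow] at e
  rw [if_neg (by omega)] at e
  exact e
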